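/- Objective decrease for the proximal subgradient method: suppose F(x) = L(x) + R₁(x) − R₂(x) with R₁, R₂ convex and L differentiable, and the step x_{t+1} ∈ prox_{1/α}^{R₁}(x_t − α(∇L(x_t) − g_t)) with g_t ∈ ∂R₂(x_t), where h(x; x_t) := L(x_t) − R₂(x_t) + ⟨∇L(x_t) − g_t, x − x_t⟩ + (1/(2α))‖x − x_t‖₂² + R₁(x) is a majorant of F (i.e., h(x; x_t) ≥ F(x) for all x). Then F(x_t) − F(x_{t+1}) ≥ (1/(2α))‖x_t − x_{t+1}‖₂². -/

import Mathlib

open scoped RealInnerProductSpace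

private lemma psm_expand {d : ℕ} (a w : EuclideanSpace ℝ (Fin d)) (lam : ℝ) :
    ‖a - lam • w‖ ^ 2 = ‖a‖ ^ 2 - 2 * lam * ⟪a, w⟫ + lam ^ 2 * ‖w‖ ^ 2 := by
  rw [norm_sub_sq_real, real_inner_smul_right, norm_smul, mul_pow, Real.norm_eq_abs, sq_abs]
  ring

/-- Objective decrease for the proximal subgradient method:
`F(x_t) − F(x_{t+1}) ≥ ‖x_t − x_{t+1}‖²/(2α)`. -/
theorem psm_objective_decrease {d : ℕ}
    (L R₁ R₂ F : EuclideanSpace ℝ (Fin d) → ℝ)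
    (hL : Differentiable ℝ L)
    (hR₁ : ConvexOn ℝ Set.univ R₁) (hR₂ : ConvexOn ℝ Set.univ R₂)
    (hF : ∀ x, F x = L x + R₁ x - R₂ x)
    (α : ℝ) (hα : 0 < α)
    (xt xt1 gt : EuclideanSpace ℝ (Fin d))
    (hgt : ∀ z, R₂ z ≥ R₂ xt + ⟪gt, z - xt⟫)
    (hprox : ∀ z, (1 / (2 * α)) * ‖(xt - α • (gradient L xt - gt)) - xt1‖ ^ 2 + R₁ xt1 ≤
      (1 / (2 * α)) * ‖(xt - α • (gradient L xt - gt)) - z‖ ^ 2 + R₁ z)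
    (hmaj : ∀ z, L xt - R₂ xt + ⟪gradient L xt - gt, z - xt⟫ +
      (1 / (2 * α)) * ‖z - xt‖ ^ 2 + R₁ z ≥ F z) :
    F xt - F xt1 ≥ (1 / (2 * α)) * ‖xt - xt1‖ ^ 2 := by
  set v := gradient L xt - gt with hv
  set w := xt - xt1 with hw
  set c := ‖w‖ ^ 2 with hc
  have hcnn : 0 ≤ c := sq_nonneg _
  have h2α : 0 < 2 * α := by linarith
  -- Key inequality for each small lam
  have key : ∀ lam : ℝ, 0 < lam → lam ≤ 1 →
      (1 / (2 * α)) * c - (lam / (2 * α)) * c ≤ F xt - F xt1 := by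
    intro lam hl hl1
    -- prox inequality at z = xt1 + lam • w
    have hp := hprox (xt1 + lam • w)
    have hconv := hR₁.2 (Set.mem_univ xt1) (Set.mem_univ xt)
      (by linarith : (0:ℝ) ≤ 1 - lam) hl.le (by ring)
    have heq : (1 - lam) • xt1 + lam • xt = xt1 + lam • w := by
      rw [hw]; module
    rw [heq, smul_eq_mul, smul_eq_mul] at hconv
    have hsplit : (xt - α • v) - (xt1 + lam • w) = ((xt - α • v) - xt1) - lam • w := by
      abel
    rw [hsplit, psm_expand] at hp
    -- inner product computation
    have hinner : ⟪(xt - α • v) - xt1, w⟫ = c - α * ⟪v, w⟫ := by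
      have h : (xt - α • v) - xt1 = w - α • v := by rw [hw]; abel
      rw [h, inner_sub_left, real_inner_smul_left, real_inner_self_eq_norm_sq, hc]
    rw [hinner, ← hc] at hp
    -- combine hp and hconv
    have hcomb := hp.trans (add_le_add_right hconv _)
    have hexp : (1 / (2 * α)) * (‖(xt - α • v) - xt1‖ ^ 2 - 2 * lam * (c - α * ⟪v, w⟫)
          + lam ^ 2 * c)
        = (1 / (2 * α)) * ‖(xt - α • v) - xt1‖ ^ 2
          + lam * (- (1 / α) * c + ⟪v, w⟫ + (lam / (2 * α)) * c) := by
      field_simp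
      ring
    have hmul : lam * R₁ xt1 ≤
        lam * (R₁ xt + (- (1 / α) * c + ⟪v, w⟫ + (lam / (2 * α)) * c)) := by
      rw [mul_add]
      nlinarith [hcomb, hexp]
    have hR : R₁ xt1 ≤ R₁ xt + (- (1 / α) * c + ⟪v, w⟫ + (lam / (2 * α)) * c) :=
      le_of_mul_le_mul_left (by linarith [hmul]) hl
    -- majorization at xt1
    have hm := hmaj xt1
    have hi1 : ⟪v, xt1 - xt⟫ = - ⟪v, w⟫ := by
      rw [hw, show xt1 - xt = -(xt - xt1) by abel, inner_neg_right]
    have hn1 : ‖xt1 - xt‖ ^ 2 = c := by rw [hc, hw, norm_sub_rev]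
    rw [hi1, hn1] at hm
    have hFxt : F xt = L xt + R₁ xt - R₂ xt := hF xt
    have h3 : (1 / α) * c = 2 * ((1 / (2 * α)) * c) := by
      field_simp
    linarith [hm, hR, hFxt, h3]
  -- Conclude by letting lam → 0 (ε-argument)
  rw [ge_iff_le]
  refine le_of_forall_pos_le_add fun ε hε => ?_
  set lam := min 1 (2 * α * ε / (c + 1)) with hlam
  have hl0 : 0 < lam := by
    apply lt_min one_pos; positivity
  have hl1 : lam ≤ 1 := min_le_left _ _
  have hcc : 0 < c + 1 := by linarith
  have hbound : (lam / (2 * α)) * c ≤ ε := by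
    have h1 : lam ≤ 2 * α * ε / (c + 1) := min_le_right _ _
    have h2 : lam * c ≤ (2 * α * ε / (c + 1)) * c := mul_le_mul_of_nonneg_right h1 hcnn
    have h4 : (2 * α * ε / (c + 1)) * c / (2 * α) = ε * (c / (c + 1)) := by
      field_simp
    have h5 : c / (c + 1) ≤ 1 := by rw [div_le_one hcc]; linarith
    calc (lam / (2 * α)) * c = (lam * c) / (2 * α) := by ring
      _ ≤ ((2 * α * ε / (c + 1)) * c) / (2 * α) := by
          exact (div_le_div_iff_of_pos_right h2α).mpr h2
      _ = ε * (c / (c + 1)) := h4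
      _ ≤ ε * 1 := mul_le_mul_of_nonneg_left h5 hε.le
      _ = ε := mul_one ε
  have := key lam hl0 hl1
  linarith
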